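/- Let μ/α and ν/β be skew shapes (α ⊆ μ, β ⊆ ν) and let (μ/α, ν/β)~ = (λ/σ, ρ/τ). Then, in dominance order, col(μ/α) ∪ col(ν/β) ⪰ col(λ/σ) ∪ col(ρ/τ). -/

import Mathlib

open scoped BigOperators

/-- `conj f j` is the number of indices `i` with `f i > j`, i.e. the length of the
`(j+1)`-st column of the Young diagram of `f` (0-indexed conjugate partition). -/
noncomputable def conj (f : ℕ → ℕ) (j : ℕ) : ℕ := Nat.card {i : ℕ | j < f i}

/-- `f` is a partition: weakly decreasing with finitely many nonzero parts
(0-indexed: the `(i+1)`-st part is `f i`). -/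
def IsPartition (f : ℕ → ℕ) : Prop := Antitone f ∧ ∃ N, ∀ i, N ≤ i → f i = 0

/-- the number of nonzero parts of `f` -/
noncomputable def len (f : ℕ → ℕ) : ℕ := Nat.card {i : ℕ | f i ≠ 0}

/-- the sum of the parts, `|f|` -/
noncomputable def wt (f : ℕ → ℕ) : ℕ := ∑ᶠ i, f i

/-- `R` is the weakly decreasing rearrangement of the (multiset of nonzero) values of `f`:
`R` is a partition and, for every threshold `t`, `R` has as many parts `> t` as `f` does. -/
def IsSortOf (R f : ℕ → ℕ) : Prop := IsPartition R ∧ ∀ t, conj R t = conj f t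

/-- `γ = μ ∪ ν` : `γ` is the decreasing rearrangement of all the parts of `μ` and `ν`
together: for every threshold `t`, the number of parts of `γ` that are `> t` equals the
number of such parts of `μ` plus the number of such parts of `ν`. -/
def IsUnion (γ μ ν : ℕ → ℕ) : Prop := IsPartition γ ∧ ∀ t, conj γ t = conj μ t + conj ν t

/-- `(l, r) = (μ, ν)~` : with `γ₁ ≥ γ₂ ≥ ⋯` the decreasing rearrangement of all the parts
of `μ` and `ν`, `l = (γ₁, γ₃, γ₅, …)` and `r = (γ₂, γ₄, γ₆, …)` (0-indexed below). -/
def IsTilde (μ ν l r : ℕ → ℕ) : Prop :=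
  ∃ γ : ℕ → ℕ, IsUnion γ μ ν ∧ (∀ i, l i = γ (2 * i)) ∧ (∀ i, r i = γ (2 * i + 1))

/-- dominance order `θ ⪰ π`: every initial partial sum of `θ` is at least that of `π`. -/
def Dominates (θ π : ℕ → ℕ) : Prop :=
  ∀ k, ∑ i ∈ Finset.range k, π i ≤ ∑ i ∈ Finset.range k, θ i

/-- the complete homogeneous symmetric polynomial `h_k` in `n` variables,
with the convention `h_k = 0` for `k < 0`. -/
noncomputable def hpoly (n : ℕ) (k : ℤ) : MvPolynomial (Fin n) ℤ :=
  if 0 ≤ k then MvPolynomial.hsymm (Fin n) ℤ k.toNat else 0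

/-- the skew Schur polynomial `s_{μ/α}` in `n` variables, defined by the
Jacobi–Trudi determinant `det (h_{μ_i - α_j - i + j})`. -/
noncomputable def skewSchur (n : ℕ) (μ α : ℕ → ℕ) : MvPolynomial (Fin n) ℤ :=
  Matrix.det (Matrix.of fun i j : Fin (len μ) =>
    hpoly n ((μ (i : ℕ) : ℤ) - (α (j : ℕ) : ℤ) - ((i : ℕ) : ℤ) + ((j : ℕ) : ℤ)))

/-- the Schur polynomial `s_μ` in `n` variables. -/
noncomputable def schur (n : ℕ) (μ : ℕ → ℕ) : MvPolynomial (Fin n) ℤ :=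
  skewSchur n μ (fun _ => 0)

/-- A symmetric function, given as the compatible family of its truncations to `n`
variables for every `n`, is Schur-positive if it is a linear combination of Schur
functions with nonnegative integer coefficients. -/
def SchurPositive (F : ∀ n : ℕ, MvPolynomial (Fin n) ℤ) : Prop :=
  ∃ c : (ℕ → ℕ) → ℕ, (Function.support c).Finite ∧
    (∀ θ, c θ ≠ 0 → IsPartition θ) ∧
    ∀ n, F n = ∑ᶠ θ : ℕ → ℕ, (c θ : ℤ) • schur n θ

/-- `c` is the family of coefficients in the Schur expansion of `s_μ s_ν`,
i.e. the Littlewood–Richardson coefficients `c θ = c^θ_{μν}`. -/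
def IsSchurExpansionOfProduct (μ ν : ℕ → ℕ) (c : (ℕ → ℕ) → ℤ) : Prop :=
  (Function.support c).Finite ∧ (∀ θ, c θ ≠ 0 → IsPartition θ) ∧
    ∀ n, schur n μ * schur n ν = ∑ᶠ θ : ℕ → ℕ, c θ • schur n θ

/-- `c` is the family of coefficients in the Schur expansion of `s_{μ/α} s_{ν/β}`. -/
def IsSchurExpansionOfSkewProduct (μ α ν β : ℕ → ℕ) (c : (ℕ → ℕ) → ℤ) : Prop :=
  (Function.support c).Finite ∧ (∀ θ, c θ ≠ 0 → IsPartition θ) ∧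
    ∀ n, skewSchur n μ α * skewSchur n ν β = ∑ᶠ θ : ℕ → ℕ, c θ • schur n θ

/-- a hook partition `(j, 1^k)`, `j ≥ 1`: nonempty, and all parts after the first are ≤ 1. -/
def IsHook (f : ℕ → ℕ) : Prop := IsPartition f ∧ 1 ≤ f 0 ∧ ∀ i, 1 ≤ i → f i ≤ 1

lemma natcard_Iio (c : ℕ) : Nat.card (Set.Iio c) = c := by
  have : (Set.Iio c) = ↑(Finset.range c) := by ext i; simp
  rw [this, Nat.card_coe_set_eq, Set.ncard_coe_finset, Finset.card_range]

lemma conj_eq_card_filter (f : ℕ → ℕ) (t J : ℕ) (h : ∀ i, t < f i → i < J) :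
    conj f t = ((Finset.range J).filter (fun i => t < f i)).card := by
  have hs : {i : ℕ | t < f i} = ↑((Finset.range J).filter fun i => t < f i) := by
    ext i
    simp only [Set.mem_setOf_eq, Finset.coe_filter, Finset.mem_range]
    exact ⟨fun hi => ⟨h i hi, hi⟩, fun hi => hi.2⟩
  unfold conj
  rw [hs, Nat.card_coe_set_eq, Set.ncard_coe_finset]

lemma conj_part_iff (f : ℕ → ℕ) (hf : IsPartition f) (t : ℕ) :
    ∀ i, t < f i ↔ i < conj f t := by
  obtain ⟨hmono, N, hN⟩ := hf
  have hex : ∃ i, f i ≤ t := ⟨N, by rw [hN N le_rfl]; omega⟩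
  have key : ∀ i, t < f i ↔ i < Nat.find hex := by
    intro i
    constructor
    · intro hi
      by_contra hc
      push_neg at hc
      exact absurd (le_trans (hmono hc) (Nat.find_spec hex)) (by omega)
    · intro hi
      have := Nat.find_min hex hi
      omega
  have hset : {i : ℕ | t < f i} = Set.Iio (Nat.find hex) := by
    ext i; simpa using key i
  have hc : conj f t = Nat.find hex := by
    unfold conj; rw [hset, natcard_Iio]
  rw [hc]; exact key

lemma conj_even (γ l : ℕ → ℕ) (hγ : IsPartition γ) (hl : ∀ i, l i = γ (2 * i)) (t : ℕ) :
    conj l t = (conj γ t + 1) / 2 := by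
  have key := conj_part_iff γ hγ t
  have hset : {i : ℕ | t < l i} = Set.Iio ((conj γ t + 1) / 2) := by
    ext i
    simp only [Set.mem_setOf_eq, Set.mem_Iio, hl i, key (2 * i)]
    omega
  have hc : conj l t = Nat.card {i : ℕ | t < l i} := rfl
  rw [hc, hset, natcard_Iio]

lemma conj_odd (γ r : ℕ → ℕ) (hγ : IsPartition γ) (hr : ∀ i, r i = γ (2 * i + 1)) (t : ℕ) :
    conj r t = conj γ t / 2 := by
  have key := conj_part_iff γ hγ t
  have hset : {i : ℕ | t < r i} = Set.Iio (conj γ t / 2) := by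
    ext i
    simp only [Set.mem_setOf_eq, Set.mem_Iio, hr i, key (2 * i + 1)]
    omega
  have hc : conj r t = Nat.card {i : ℕ | t < r i} := rfl
  rw [hc, hset, natcard_Iio]

lemma card_filter_lt (c s : ℕ) :
    ((Finset.range s).filter (fun t => t < c)).card = min c s := by
  rw [show (Finset.range s).filter (fun t => t < c) = Finset.range (min c s) by
    ext t; simp only [Finset.mem_filter, Finset.mem_range]; omega]
  simp

lemma sum_card_filter (g : ℕ → ℕ) (s J : ℕ) :
    ∑ t ∈ Finset.range s, ((Finset.range J).filter (fun j => t < g j)).card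
      = ∑ j ∈ Finset.range J, min (g j) s := by
  simp_rw [Finset.card_filter]
  rw [Finset.sum_comm]
  refine Finset.sum_congr rfl fun j _ => ?_
  rw [← Finset.card_filter, card_filter_lt]

lemma sum_le_sorted (u : ℕ → ℕ) (hmono : ∀ a b, a ≤ b → u b ≤ u a) :
    ∀ n (S : Finset ℕ), S.card = n → ∑ t ∈ S, u t ≤ ∑ t ∈ Finset.range n, u t := by
  intro n
  induction n with
  | zero => intro S hS; simp [Finset.card_eq_zero.mp hS]
  | succ n ih =>
    intro S hS
    have hne : S.Nonempty := Finset.card_pos.mp (by omega)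
    obtain ⟨M, hMem, hMax⟩ : ∃ M ∈ S, ∀ t ∈ S, t ≤ M :=
      ⟨S.max' hne, S.max'_mem hne, fun t ht => S.le_max' t ht⟩
    have hsub : S ⊆ Finset.range (M + 1) :=
      fun t ht => Finset.mem_range.mpr (Nat.lt_succ_of_le (hMax t ht))
    have hcard : n + 1 ≤ M + 1 := by
      calc n + 1 = S.card := hS.symm
        _ ≤ (Finset.range (M + 1)).card := Finset.card_le_card hsub
        _ = M + 1 := by simp
    rw [← Finset.add_sum_erase S u hMem, Finset.sum_range_succ]
    have h1 : ∑ t ∈ S.erase M, u t ≤ ∑ t ∈ Finset.range n, u t :=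
      ih _ (by rw [Finset.card_erase_of_mem hMem, hS]; rfl)
    have h2 : u M ≤ u n := hmono n M (by omega)
    omega

lemma dual_lemma (u v : ℕ → ℕ) (T k : ℕ) (hmono : ∀ a b, a ≤ b → u b ≤ u a)
    (hpre : ∀ s, ∑ t ∈ Finset.range s, u t ≤ ∑ t ∈ Finset.range s, v t)
    (htot : ∑ t ∈ Finset.range T, u t = ∑ t ∈ Finset.range T, v t) :
    ∑ t ∈ Finset.range T, min (v t) k ≤ ∑ t ∈ Finset.range T, min (u t) k := by
  have key : ∑ t ∈ Finset.range T, (u t - k) ≤ ∑ t ∈ Finset.range T, (v t - k) := by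
    set S := (Finset.range T).filter (fun t => k < u t) with hS
    set s := S.card with hs
    have hsT : s ≤ T := le_trans (Finset.card_le_card (Finset.filter_subset _ _))
      (by simp)
    have e1 : ∑ t ∈ Finset.range T, (u t - k) = ∑ t ∈ S, (u t - k) := by
      refine (Finset.sum_subset (Finset.filter_subset _ _) ?_).symm
      intro t ht hns
      simp only [Finset.mem_filter, ht, true_and] at hns
      omega
    have e2 : ∑ t ∈ S, (u t - k) = ∑ t ∈ S, u t - k * s := by
      have : ∀ t ∈ S, k ≤ u t := by
        intro t ht; rw [hS] at ht; simp only [Finset.mem_filter] at ht; omega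
      rw [hs, Finset.card_eq_sum_ones, Finset.mul_sum]
      rw [← Finset.sum_tsub_distrib]
      · exact Finset.sum_congr rfl fun t ht => by simp
      · intro t ht; simpa using this t ht
    have e3 : ∑ t ∈ S, u t ≤ ∑ t ∈ Finset.range s, u t := sum_le_sorted u hmono s S rfl
    have e4 : ∑ t ∈ Finset.range s, u t ≤ ∑ t ∈ Finset.range s, v t := hpre s
    have e5 : ∑ t ∈ Finset.range s, v t - k * s ≤ ∑ t ∈ Finset.range s, (v t - k) := by
      rw [tsub_le_iff_right]
      calc ∑ t ∈ Finset.range s, v t ≤ ∑ t ∈ Finset.range s, ((v t - k) + k) :=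
            Finset.sum_le_sum fun t _ => by omega
        _ = ∑ t ∈ Finset.range s, (v t - k) + k * s := by
            rw [Finset.sum_add_distrib]; simp [mul_comm]
    have e6 : ∑ t ∈ Finset.range s, (v t - k) ≤ ∑ t ∈ Finset.range T, (v t - k) :=
      Finset.sum_le_sum_of_subset (by simp [Finset.range_subset_range, hsT])
    omega
  have h1 : ∑ t ∈ Finset.range T, min (u t) k + ∑ t ∈ Finset.range T, (u t - k)
      = ∑ t ∈ Finset.range T, u t := by
    rw [← Finset.sum_add_distrib]
    exact Finset.sum_congr rfl fun t _ => by omega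
  have h2 : ∑ t ∈ Finset.range T, min (v t) k + ∑ t ∈ Finset.range T, (v t - k)
      = ∑ t ∈ Finset.range T, v t := by
    rw [← Finset.sum_add_distrib]
    exact Finset.sum_congr rfl fun t _ => by omega
  omega

lemma sum_part (U : ℕ → ℕ) (hU : IsPartition U) (T k : ℕ) (hT : U 0 ≤ T) :
    ∑ i ∈ Finset.range k, U i = ∑ t ∈ Finset.range T, min (conj U t) k := by
  have key := fun t => conj_part_iff U hU t
  have hUi : ∀ i, U i ≤ T := fun i => le_trans (hU.1 (Nat.zero_le i)) hT
  have e1 : ∀ i, U i = ((Finset.range T).filter (fun t => t < U i)).card := by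
    intro i; rw [card_filter_lt]; have := hUi i; omega
  calc ∑ i ∈ Finset.range k, U i
      = ∑ i ∈ Finset.range k, ((Finset.range T).filter (fun t => t < U i)).card :=
        Finset.sum_congr rfl fun i _ => e1 i
    _ = ∑ i ∈ Finset.range k, ∑ t ∈ Finset.range T, (if t < U i then 1 else 0) := by
        simp_rw [Finset.card_filter]
    _ = ∑ t ∈ Finset.range T, ∑ i ∈ Finset.range k, (if t < U i then 1 else 0) :=
        Finset.sum_comm
    _ = ∑ t ∈ Finset.range T, min (conj U t) k := by
        refine Finset.sum_congr rfl fun t _ => ?_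
        rw [← Finset.card_filter]
        rw [show (Finset.range k).filter (fun i => t < U i) = Finset.range (min (conj U t) k) by
          ext i
          simp only [Finset.mem_filter, Finset.mem_range, key t i]
          omega]
        simp

/-- Lemma 13(ii): if `(μ/α, ν/β)~ = (λ/σ, ρ/τ)` then
`col(μ/α) ∪ col(ν/β) ⪰ col(λ/σ) ∪ col(ρ/τ)` in dominance order, where `col` is the
decreasing rearrangement of the column lengths of a skew shape. -/
theorem stmt11 (μ α ν β l σ ρ τ C1 C2 C3 C4 U V : ℕ → ℕ)
    (hμ : IsPartition μ) (hα : IsPartition α) (hν : IsPartition ν) (hβ : IsPartition β)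
    (hαμ : ∀ i, α i ≤ μ i) (hβν : ∀ i, β i ≤ ν i)
    (ht1 : IsTilde μ ν l ρ) (ht2 : IsTilde α β σ τ)
    (hC1 : IsSortOf C1 (fun j => conj μ j - conj α j))
    (hC2 : IsSortOf C2 (fun j => conj ν j - conj β j))
    (hC3 : IsSortOf C3 (fun j => conj l j - conj σ j))
    (hC4 : IsSortOf C4 (fun j => conj ρ j - conj τ j))
    (hU : IsUnion U C1 C2) (hV : IsUnion V C3 C4) :
    Dominates U V := by
  classical
  obtain ⟨γ, ⟨hγp, hγc⟩, hlγ, hργ⟩ := ht1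
  obtain ⟨δ, ⟨hδp, hδc⟩, hσδ, hτδ⟩ := ht2
  obtain ⟨Nμ, hNμ⟩ := hμ.2
  obtain ⟨Nν, hNν⟩ := hν.2
  -- bounds on conjugates
  have hμb : ∀ j, conj μ j ≤ Nμ := by
    intro j
    rw [conj_eq_card_filter μ j Nμ (fun i hi => by
      by_contra h; push_neg at h; rw [hNμ i h] at hi; omega)]
    exact le_trans (Finset.card_filter_le _ _) (by simp)
  have hνb : ∀ j, conj ν j ≤ Nν := by
    intro j
    rw [conj_eq_card_filter ν j Nν (fun i hi => by
      by_contra h; push_neg at h; rw [hNν i h] at hi; omega)]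
    exact le_trans (Finset.card_filter_le _ _) (by simp)
  have haμ : ∀ j, conj α j ≤ conj μ j := by
    intro j
    rw [conj_eq_card_filter α j Nμ (fun i hi => by
      by_contra h; push_neg at h
      have := hαμ i; rw [hNμ i h] at this; omega),
      conj_eq_card_filter μ j Nμ (fun i hi => by
      by_contra h; push_neg at h; rw [hNμ i h] at hi; omega)]
    refine Finset.card_le_card (fun i hi => ?_)
    simp only [Finset.mem_filter, Finset.mem_range] at hi ⊢
    exact ⟨hi.1, lt_of_lt_of_le hi.2 (hαμ i)⟩
  have hbν : ∀ j, conj β j ≤ conj ν j := by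
    intro j
    rw [conj_eq_card_filter β j Nν (fun i hi => by
      by_contra h; push_neg at h
      have := hβν i; rw [hNν i h] at this; omega),
      conj_eq_card_filter ν j Nν (fun i hi => by
      by_contra h; push_neg at h; rw [hNν i h] at hi; omega)]
    refine Finset.card_le_card (fun i hi => ?_)
    simp only [Finset.mem_filter, Finset.mem_range] at hi ⊢
    exact ⟨hi.1, lt_of_lt_of_le hi.2 (hβν i)⟩
  -- conjugates of the tilde shapes
  have hconjl : ∀ j, conj l j = (conj μ j + conj ν j + 1) / 2 := fun j => by
    rw [conj_even γ l hγp hlγ j, hγc j]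
  have hconjρ : ∀ j, conj ρ j = (conj μ j + conj ν j) / 2 := fun j => by
    rw [conj_odd γ ρ hγp hργ j, hγc j]
  have hconjσ : ∀ j, conj σ j = (conj α j + conj β j + 1) / 2 := fun j => by
    rw [conj_even δ σ hδp hσδ j, hδc j]
  have hconjτ : ∀ j, conj τ j = (conj α j + conj β j) / 2 := fun j => by
    rw [conj_odd δ τ hδp hτδ j, hδc j]
  -- column bound J
  set J : ℕ := max (μ 0) (ν 0) with hJ
  have hμ0 : ∀ j, 0 < conj μ j → j < J := fun j hj => by
    have := (conj_part_iff μ hμ j 0).mpr hj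
    omega
  have hν0 : ∀ j, 0 < conj ν j → j < J := fun j hj => by
    have := (conj_part_iff ν hν j 0).mpr hj
    omega
  -- the four column-length functions
  set x : ℕ → ℕ := fun j => conj μ j - conj α j with hxdef
  set y : ℕ → ℕ := fun j => conj ν j - conj β j with hydef
  set x' : ℕ → ℕ := fun j => conj l j - conj σ j with hx'def
  set y' : ℕ → ℕ := fun j => conj ρ j - conj τ j with hy'def
  have hbx : ∀ t j, t < x j → j < J := fun t j ht => by
    apply hμ0; simp only [hxdef] at ht; omega
  have hby : ∀ t j, t < y j → j < J := fun t j ht => by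
    apply hν0; simp only [hydef] at ht; omega
  have hbx' : ∀ t j, t < x' j → j < J := fun t j ht => by
    simp only [hx'def] at ht
    have h1 : 0 < conj l j := by omega
    rw [hconjl j] at h1
    rcases Nat.lt_or_ge 0 (conj μ j) with h | h
    · exact hμ0 j h
    · exact hν0 j (by omega)
  have hby' : ∀ t j, t < y' j → j < J := fun t j ht => by
    simp only [hy'def] at ht
    have h1 : 0 < conj ρ j := by omega
    rw [hconjρ j] at h1
    rcases Nat.lt_or_ge 0 (conj μ j) with h | h
    · exact hμ0 j h
    · exact hν0 j (by omega)
  -- conj U, conj V as filter cards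
  have hu : ∀ t, conj U t
      = ((Finset.range J).filter (fun j => t < x j)).card
        + ((Finset.range J).filter (fun j => t < y j)).card := by
    intro t
    rw [hU.2 t, hC1.2 t, hC2.2 t,
      conj_eq_card_filter _ t J (hbx t), conj_eq_card_filter _ t J (hby t)]
  have hv : ∀ t, conj V t
      = ((Finset.range J).filter (fun j => t < x' j)).card
        + ((Finset.range J).filter (fun j => t < y' j)).card := by
    intro t
    rw [hV.2 t, hC3.2 t, hC4.2 t,
      conj_eq_card_filter _ t J (hbx' t), conj_eq_card_filter _ t J (hby' t)]
  -- prefix sums of conjugates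
  have hsu : ∀ s, ∑ t ∈ Finset.range s, conj U t
      = ∑ j ∈ Finset.range J, (min (x j) s + min (y j) s) := by
    intro s
    simp_rw [hu]
    rw [Finset.sum_add_distrib, sum_card_filter, sum_card_filter,
      ← Finset.sum_add_distrib]
  have hsv : ∀ s, ∑ t ∈ Finset.range s, conj V t
      = ∑ j ∈ Finset.range J, (min (x' j) s + min (y' j) s) := by
    intro s
    simp_rw [hv]
    rw [Finset.sum_add_distrib, sum_card_filter, sum_card_filter,
      ← Finset.sum_add_distrib]
  -- the key per-column facts
  have hkey : ∀ s j, min (x j) s + min (y j) s ≤ min (x' j) s + min (y' j) s := by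
    intro s j
    have h1 := haμ j
    have h2 := hbν j
    simp only [hxdef, hydef, hx'def, hy'def, hconjl j, hconjρ j, hconjσ j, hconjτ j]
    omega
  have hpre : ∀ s, ∑ t ∈ Finset.range s, conj U t ≤ ∑ t ∈ Finset.range s, conj V t := by
    intro s
    rw [hsu s, hsv s]
    exact Finset.sum_le_sum fun j _ => hkey s j
  -- the big threshold
  set B : ℕ := Nμ + Nν with hB
  have hxb : ∀ j, x j ≤ B := fun j => by
    have := hμb j; simp only [hxdef]; omega
  have hyb : ∀ j, y j ≤ B := fun j => by
    have := hνb j; simp only [hydef]; omega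
  have hx'b : ∀ j, x' j ≤ B := fun j => by
    have := hμb j; have := hνb j
    simp only [hx'def, hconjl j, hconjσ j]; omega
  have hy'b : ∀ j, y' j ≤ B := fun j => by
    have := hμb j; have := hνb j
    simp only [hy'def, hconjρ j, hconjτ j]; omega
  have htot : ∑ t ∈ Finset.range B, conj U t = ∑ t ∈ Finset.range B, conj V t := by
    rw [hsu B, hsv B]
    refine Finset.sum_congr rfl fun j _ => ?_
    have h1 := haμ j
    have h2 := hbν j
    have h3 := hxb j
    have h4 := hyb j
    have h5 := hx'b j
    have h6 := hy'b j
    have e1 : min (x j) B = x j := by omega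
    have e2 : min (y j) B = y j := by omega
    have e3 : min (x' j) B = x' j := by omega
    have e4 : min (y' j) B = y' j := by omega
    rw [e1, e2, e3, e4]
    simp only [hxdef, hydef, hx'def, hy'def, hconjl j, hconjρ j, hconjσ j, hconjτ j]
    omega
  -- U 0 and V 0 are at most B
  have huB : conj U B = 0 := by
    rw [hu B]
    have e1 : (Finset.range J).filter (fun j => B < x j) = ∅ :=
      Finset.filter_eq_empty_iff.mpr (fun j _ => by have := hxb j; omega)
    have e2 : (Finset.range J).filter (fun j => B < y j) = ∅ :=
      Finset.filter_eq_empty_iff.mpr (fun j _ => by have := hyb j; omega)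
    rw [e1, e2]; simp
  have hvB : conj V B = 0 := by
    rw [hv B]
    have e1 : (Finset.range J).filter (fun j => B < x' j) = ∅ :=
      Finset.filter_eq_empty_iff.mpr (fun j _ => by have := hx'b j; omega)
    have e2 : (Finset.range J).filter (fun j => B < y' j) = ∅ :=
      Finset.filter_eq_empty_iff.mpr (fun j _ => by have := hy'b j; omega)
    rw [e1, e2]; simp
  have hU0 : U 0 ≤ B := by
    by_contra h
    push_neg at h
    have := (conj_part_iff U hU.1 B 0).mp h
    omega
  have hV0 : V 0 ≤ B := by
    by_contra h
    push_neg at h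
    have := (conj_part_iff V hV.1 B 0).mp h
    omega
  -- monotonicity of conj U
  have hmono : ∀ a b, a ≤ b → conj U b ≤ conj U a := by
    intro a b hab
    rw [hu a, hu b]
    have e1 : (Finset.range J).filter (fun j => b < x j)
        ⊆ (Finset.range J).filter (fun j => a < x j) := fun j hj => by
      simp only [Finset.mem_filter, Finset.mem_range] at hj ⊢
      exact ⟨hj.1, by omega⟩
    have e2 : (Finset.range J).filter (fun j => b < y j)
        ⊆ (Finset.range J).filter (fun j => a < y j) := fun j hj => by
      simp only [Finset.mem_filter, Finset.mem_range] at hj ⊢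
      exact ⟨hj.1, by omega⟩
    exact Nat.add_le_add (Finset.card_le_card e1) (Finset.card_le_card e2)
  -- conclude
  intro k
  rw [sum_part U hU.1 B k hU0, sum_part V hV.1 B k hV0]
  exact dual_lemma (conj U) (conj V) B k hmono hpre htot
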